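/- Let β̂ := σᵤ/√(ΔΣ₀). Then T(β̂) = β̂, T is differentiable at β̂, and T′(β̂) = 0; that is, β̂ is a super-attractive fixed point of T. -/

import Mathlib

/-- The one-period policy-iteration map `T(β) = (β² Sig0 Δ + σu²)/(2 Δ β Sig0)`. -/
noncomputable def T1p (Δ σu Sig0 β : ℝ) : ℝ :=
  (β ^ 2 * Sig0 * Δ + σu ^ 2) / (2 * Δ * β * Sig0)

/-- With `β̂ := σu/√(Δ Sig0)` one has `T(β̂) = β̂` and `T` is differentiable at `β̂`
with `T'(β̂) = 0`; i.e. `β̂` is a super-attractive fixed point of `T`. -/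
theorem one_period_super_attractive (Δ σu Sig0 : ℝ) (hΔ : 0 < Δ) (hσ : 0 < σu)
    (hSig : 0 < Sig0) :
    T1p Δ σu Sig0 (σu / Real.sqrt (Δ * Sig0)) = σu / Real.sqrt (Δ * Sig0) ∧
    HasDerivAt (T1p Δ σu Sig0) 0 (σu / Real.sqrt (Δ * Sig0)) := by
  have hΔS : 0 < Δ * Sig0 := mul_pos hΔ hSig
  have hs : 0 < Real.sqrt (Δ * Sig0) := Real.sqrt_pos.mpr hΔS
  have hsq : Real.sqrt (Δ * Sig0) ^ 2 = Δ * Sig0 := Real.sq_sqrt hΔS.le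
  set b := σu / Real.sqrt (Δ * Sig0) with hb
  have hbpos : 0 < b := div_pos hσ hs
  have hbsq : b ^ 2 = σu ^ 2 / (Δ * Sig0) := by
    rw [hb, div_pow, hsq]
  constructor
  · rw [T1p]
    rw [hbsq]
    field_simp
    rw [hbsq]
    field_simp
    ring
  · -- T = β/2 + σu²/(2ΔSig0) * β⁻¹ near b
    have h1 : HasDerivAt (fun β : ℝ => β / 2 + σu ^ 2 / (2 * Δ * Sig0) * β⁻¹)
        (1 / 2 + σu ^ 2 / (2 * Δ * Sig0) * (-(b ^ 2)⁻¹)) b := by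
      have := ((hasDerivAt_inv hbpos.ne').const_mul (σu ^ 2 / (2 * Δ * Sig0)))
      have h2 : HasDerivAt (fun β : ℝ => β / 2) (1 / 2) b := by
        simpa using (hasDerivAt_id b).div_const 2
      exact h2.add this
    have hval : (1 / 2 + σu ^ 2 / (2 * Δ * Sig0) * (-(b ^ 2)⁻¹)) = 0 := by
      rw [hbsq]
      field_simp
      ring
    rw [hval] at h1
    refine h1.congr_of_eventuallyEq ?_
    filter_upwards [eventually_ne_nhds hbpos.ne'] with x hx
    rw [T1p]
    field_simp
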